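/- In ℂ[x,y], set p = x² + xy + y³ and q = x² + y³. Then the quotient algebras ℂ[x,y]/⟨p⟩ and ℂ[x,y]/⟨q⟩ are NOT isomorphic as ℂ-algebras. -/

import Mathlib

open MvPolynomial

noncomputable section Ex21Aux

abbrev R2 : Type := MvPolynomial (Fin 2) ℂ

def M0 : Ideal R2 := Ideal.span {X 0, X 1}

lemma mem_M0 {f : R2} : f ∈ M0 ↔ constantCoeff f = 0 := by
  have himg : ({X 0, X 1} : Set R2) = MvPolynomial.X '' Set.univ := by
    ext g
    simp [Set.mem_image, Fin.exists_fin_two, eq_comm]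
  rw [M0, himg, mem_ideal_span_X_image]
  rw [show (constantCoeff f : ℂ) = coeff 0 f from rfl]
  constructor
  · intro h
    by_contra h0
    obtain ⟨i, -, hi⟩ := h 0 (mem_support_iff.mpr h0)
    simp at hi
  · intro h0 m hm
    by_contra hc
    push_neg at hc
    have : m = 0 := Finsupp.ext fun i => by simpa using hc i (Set.mem_univ i)
    rw [this] at hm
    exact mem_support_iff.mp hm h0

lemma X0_mem_M0 : (X 0 : R2) ∈ M0 := Ideal.subset_span (by simp)
lemma X1_mem_M0 : (X 1 : R2) ∈ M0 := Ideal.subset_span (by simp)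

lemma M0_eq_vanishing : M0 = vanishingIdeal ℂ {(0 : Fin 2 → ℂ)} := by
  ext f
  rw [mem_M0, mem_vanishingIdeal_singleton_iff, aeval_zero,
    Algebra.algebraMap_self, RingHom.id_apply]

instance M0_isMaximal : M0.IsMaximal := by
  rw [M0_eq_vanishing]; infer_instance

lemma cc_M0 {f : R2} (h : f ∈ M0) : constantCoeff f = 0 := mem_M0.mp h

lemma cc_pderiv_M0sq {f : R2} (h : f ∈ M0 ^ 2) (i : Fin 2) :
    constantCoeff (pderiv i f) = 0 := by
  rw [pow_two] at h
  refine Submodule.mul_induction_on h (fun g hg w hw => ?_)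
    (fun x y hx hy => by simp [hx, hy])
  simp [pderiv_mul, cc_M0 hg, cc_M0 hw]

lemma cc_M0sq {f : R2} (h : f ∈ M0 ^ 2) : constantCoeff f = 0 :=
  cc_M0 (Ideal.pow_le_self two_ne_zero h)

lemma cc_pderiv2_M0cube {f : R2} (h : f ∈ M0 ^ 3) (i j : Fin 2) :
    constantCoeff (pderiv i (pderiv j f)) = 0 := by
  rw [pow_succ] at h
  refine Submodule.mul_induction_on h (fun g hg w hw => ?_)
    (fun x y hx hy => by simp [hx, hy])
  simp [pderiv_mul, cc_M0sq hg, cc_pderiv_M0sq hg, cc_M0 hw]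

lemma cc_pderiv_eq_coeff (i : Fin 2) (f : R2) :
    constantCoeff (pderiv i f) = coeff (Finsupp.single i 1) f := by
  induction f using MvPolynomial.induction_on with
  | C a => simp [coeff_C, eq_comm, Finsupp.single_eq_zero]
  | add f g hf hg => simp [hf, hg]
  | mul_X f j hf =>
    rcases eq_or_ne j i with rfl | hne
    · rw [pderiv_mul, pderiv_X_self, mul_one, map_add, map_mul,
        coeff_mul_X', if_pos]
      · simp only [map_add, map_mul, constantCoeff_X, mul_zero, zero_add, hf, tsub_self]
        exact congrFun constantCoeff_eq f
      · simp [Finsupp.support_single_ne_zero]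
    · rw [pderiv_mul, pderiv_X_of_ne hne, mul_zero, add_zero, map_mul,
        coeff_mul_X', if_neg]
      · simp
      · simp [Finsupp.support_single_ne_zero, hne]

lemma X_mem_M0 (i : Fin 2) : (X i : R2) ∈ M0 := by
  fin_cases i
  · exact X0_mem_M0
  · exact X1_mem_M0

lemma cc_coeff0 (f : R2) : constantCoeff f = coeff 0 f := congrFun constantCoeff_eq f

lemma mem_M0sq {f : R2} (h0 : constantCoeff f = 0)
    (h1 : constantCoeff (pderiv 0 f) = 0) (h2 : constantCoeff (pderiv 1 f) = 0) :
    f ∈ M0 ^ 2 := by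
  classical
  have hXX : ∀ i j : Fin 2,
      (monomial (Finsupp.single i 1 + Finsupp.single j 1) (1 : ℂ)) ∈ M0 ^ 2 := by
    intro i j
    have hm : monomial (Finsupp.single i 1 + Finsupp.single j 1) (1 : ℂ) = X i * X j := by
      rw [← pow_one (X i), ← pow_one (X j), X_pow_eq_monomial, X_pow_eq_monomial,
        monomial_mul, one_mul]
    rw [hm, pow_two]
    exact Ideal.mul_mem_mul (X_mem_M0 i) (X_mem_M0 j)
  have hspan : Ideal.span ((fun s => monomial s (1 : ℂ)) ''
      {Finsupp.single (0 : Fin 2) 1 + Finsupp.single 0 1,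
       Finsupp.single (0 : Fin 2) 1 + Finsupp.single 1 1,
       Finsupp.single (1 : Fin 2) 1 + Finsupp.single 1 1}) ≤ M0 ^ 2 := by
    rw [Ideal.span_le]
    rintro g ⟨d, hd, rfl⟩
    rcases hd with rfl | rfl | rfl
    all_goals exact hXX _ _
  apply hspan
  rw [mem_ideal_span_monomial_image]
  intro d hd
  have hne : coeff d f ≠ 0 := mem_support_iff.mp hd
  have key : 2 ≤ d 0 + d 1 := by
    by_contra hlt
    push_neg at hlt
    have e0 : d 0 = 0 ∨ d 0 = 1 := by omega
    have e1 : d 1 = 0 ∨ d 1 = 1 := by omega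
    rcases e0 with e0 | e0 <;> rcases e1 with e1 | e1
    · refine hne ?_
      have hdz : d = 0 := Finsupp.ext fun i => by fin_cases i <;> simpa [e0, e1]
      rw [hdz, ← cc_coeff0]; exact h0
    · refine hne ?_
      have hdz : d = Finsupp.single 1 1 :=
        Finsupp.ext fun i => by fin_cases i <;> simp [e0, e1, Finsupp.single_apply]
      rw [hdz, ← cc_pderiv_eq_coeff]; exact h2
    · refine hne ?_
      have hdz : d = Finsupp.single 0 1 :=
        Finsupp.ext fun i => by fin_cases i <;> simp [e0, e1, Finsupp.single_apply]
      rw [hdz, ← cc_pderiv_eq_coeff]; exact h1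
    · omega
  rcases le_or_gt 2 (d 0) with hx | hx
  · refine ⟨Finsupp.single (0 : Fin 2) 1 + Finsupp.single 0 1, by left; rfl, ?_⟩
    intro i
    fin_cases i <;> simp [Finsupp.single_apply] <;> omega
  rcases le_or_gt 2 (d 1) with hy | hy
  · refine ⟨Finsupp.single (1 : Fin 2) 1 + Finsupp.single 1 1,
      by right; right; exact rfl, ?_⟩
    intro i
    fin_cases i <;> simp [Finsupp.single_apply] <;> omega
  · refine ⟨Finsupp.single (0 : Fin 2) 1 + Finsupp.single 1 1,
      by right; left; rfl, ?_⟩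
    intro i
    fin_cases i <;> simp [Finsupp.single_apply] <;> omega

lemma cc_pderiv_mul_right {g w : R2} (i : Fin 2) (hw0 : constantCoeff w = 0)
    (hwi : constantCoeff (pderiv i w) = 0) :
    constantCoeff (pderiv i (g * w)) = 0 := by
  simp [pderiv_mul, hw0, hwi]

lemma cc_pderiv2_mul_right {g w : R2} (i j : Fin 2) (hw0 : constantCoeff w = 0)
    (hwi : constantCoeff (pderiv i w) = 0) (hwj : constantCoeff (pderiv j w) = 0)
    (hwij : constantCoeff (pderiv i (pderiv j w)) = 0) :
    constantCoeff (pderiv i (pderiv j (g * w))) = 0 := by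
  simp [pderiv_mul, hw0, hwi, hwj, hwij]

lemma cc_pderiv2_mul_mem {S T : R2} (hS : S ∈ M0) (hT : T ∈ M0) (i j : Fin 2) :
    constantCoeff (pderiv i (pderiv j (S * T))) =
      constantCoeff (pderiv i S) * constantCoeff (pderiv j T)
      + constantCoeff (pderiv j S) * constantCoeff (pderiv i T) := by
  simp [pderiv_mul, cc_M0 hS, cc_M0 hT]
  ring

lemma mk_C_mul_smul (I : Ideal R2) (l : ℂ) (f : R2) :
    Ideal.Quotient.mk I (C l * f) = l • Ideal.Quotient.mk I f := by
  rw [← smul_eq_C_mul, ← Ideal.Quotient.mkₐ_eq_mk ℂ I]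
  exact map_smul (Ideal.Quotient.mkₐ ℂ I) l f

lemma node_side :
    ∃ m : Ideal (R2 ⧸ Ideal.span {(X 0 ^ 2 + X 0 * X 1 + X 1 ^ 3 : R2)}),
      m.IsMaximal ∧ ∃ s t, s ∈ m ∧ t ∈ m ∧ s * t ∈ m ^ 3 ∧
        ∀ l μ : ℂ, l • s + μ • t ∈ m ^ 2 → l = 0 ∧ μ = 0 := by
  set P : R2 := X 0 ^ 2 + X 0 * X 1 + X 1 ^ 3 with hPdef
  set I : Ideal R2 := Ideal.span {P} with hIdef
  set π := Ideal.Quotient.mk I with hπ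
  have hPM : P ∈ M0 := mem_M0.mpr (by simp [hPdef])
  have hIle : I ≤ M0 := by
    rw [hIdef, Ideal.span_le]; simpa using hPM
  have hker : RingHom.ker π = I := Ideal.mk_ker
  refine ⟨Ideal.map π M0, ?_, π (X 0), π (X 0 + X 1), Ideal.mem_map_of_mem _ X0_mem_M0,
    Ideal.mem_map_of_mem _ (Ideal.add_mem _ X0_mem_M0 X1_mem_M0), ?_, ?_⟩
  · rcases Ideal.map_eq_top_or_isMaximal_of_surjective π Ideal.Quotient.mk_surjective
      M0_isMaximal with htop | h
    · exfalso
      have hcm : Ideal.comap π (Ideal.map π M0) = M0 := by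
        rw [Ideal.comap_map_of_surjective π Ideal.Quotient.mk_surjective,
          ← RingHom.ker_eq_comap_bot, hker]
        exact sup_eq_left.mpr hIle
      rw [htop, Ideal.comap_top] at hcm
      exact M0_isMaximal.ne_top hcm.symm
    · exact h
  · have hmk : π (X 0) * π (X 0 + X 1) = π (-(X 1 ^ 3)) := by
      rw [← map_mul, Ideal.Quotient.mk_eq_mk_iff_sub_mem]
      have hE : (X 0 * (X 0 + X 1) - -(X 1 ^ 3) : R2) = P := by ring
      rw [hE, hIdef]
      exact Ideal.mem_span_singleton_self P
    rw [hmk, ← Ideal.map_pow]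
    exact Ideal.mem_map_of_mem _ (neg_mem (Ideal.pow_mem_pow X1_mem_M0 3))
  · intro l μ h
    have hrep : π (C l * X 0 + C μ * (X 0 + X 1)) = l • π (X 0) + μ • π (X 0 + X 1) := by
      rw [map_add, mk_C_mul_smul, mk_C_mul_smul]
    rw [← hrep, ← Ideal.map_pow] at h
    have hmem : (C l * X 0 + C μ * (X 0 + X 1) : R2) ∈ M0 ^ 2 ⊔ I := by
      have hh := Ideal.mem_comap.mpr h
      rwa [Ideal.comap_map_of_surjective π Ideal.Quotient.mk_surjective,
        ← RingHom.ker_eq_comap_bot, hker] at hh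
    obtain ⟨u, hu, v, hv, huv⟩ := Submodule.mem_sup.mp hmem
    obtain ⟨g, hg⟩ := Ideal.mem_span_singleton'.mp (hIdef ▸ hv)
    have hP0 : constantCoeff P = 0 := mem_M0.mp hPM
    have hPd : ∀ i : Fin 2, constantCoeff (pderiv i P) = 0 := by
      intro i
      fin_cases i <;>
        simp [hPdef, pderiv_mul, pderiv_pow, pderiv_X_self, pderiv_X_of_ne]
    have hLC : ∀ i : Fin 2,
        constantCoeff (pderiv i (C l * X 0 + C μ * (X 0 + X 1))) = 0 := by
      intro i
      rw [← huv, map_add, map_add, cc_pderiv_M0sq hu i, ← hg,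
        cc_pderiv_mul_right i hP0 (hPd i), add_zero]
    have e0 := hLC 0
    have e1 := hLC 1
    rw [show (pderiv (0 : Fin 2)) (C l * X 0 + C μ * (X 0 + X 1)) = C l + C μ by
      simp [pderiv_C_mul]] at e0
    rw [show (pderiv (1 : Fin 2)) (C l * X 0 + C μ * (X 0 + X 1)) = C μ by
      simp [pderiv_C_mul]] at e1
    simp only [map_add, constantCoeff_C] at e0 e1
    constructor
    · linear_combination e0 - e1
    · linear_combination e1

def tr (pt : Fin 2 → ℂ) : R2 →ₐ[ℂ] R2 := aeval (fun i => X i - C (pt i))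

def trInv (pt : Fin 2 → ℂ) : R2 →ₐ[ℂ] R2 := aeval (fun i => X i + C (pt i))

lemma tr_comp₁ (pt : Fin 2 → ℂ) : (tr pt).comp (trInv pt) = AlgHom.id ℂ R2 := by
  apply MvPolynomial.algHom_ext
  intro i
  simp [tr, trInv, algebraMap_eq]

lemma tr_comp₂ (pt : Fin 2 → ℂ) : (trInv pt).comp (tr pt) = AlgHom.id ℂ R2 := by
  apply MvPolynomial.algHom_ext
  intro i
  simp [tr, trInv, algebraMap_eq]

def trEquiv (pt : Fin 2 → ℂ) : R2 ≃ₐ[ℂ] R2 :=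
  AlgEquiv.ofAlgHom (tr pt) (trInv pt) (tr_comp₁ pt) (tr_comp₂ pt)

lemma trEquiv_apply_X (pt : Fin 2 → ℂ) (i : Fin 2) :
    trEquiv pt (X i) = X i - C (pt i) := by
  simp [trEquiv, tr]

lemma trEquiv_symm_apply (pt : Fin 2 → ℂ) (x : R2) :
    (trEquiv pt).symm x = aeval (fun i => X i + C (pt i)) x := rfl

lemma trEquiv_C (pt : Fin 2 → ℂ) (z : ℂ) : trEquiv pt (C z) = C z := by
  simpa [algebraMap_eq] using (trEquiv pt).commutes z

lemma dep_of_rel (σ0 σ1 τ0 τ1 : ℂ) (h11 : σ1 * τ1 = 0) (h01 : σ0 * τ1 + σ1 * τ0 = 0) :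
    ∃ l μ : ℂ, ¬(l = 0 ∧ μ = 0) ∧ l * σ0 + μ * τ0 = 0 ∧ l * σ1 + μ * τ1 = 0 := by
  by_cases hτ1z : τ1 = 0
  · by_cases hσ1z : σ1 = 0
    · by_cases hσ0z : σ0 = 0
      · exact ⟨1, 0, by simp, by rw [hσ0z]; ring, by rw [hσ1z, hτ1z]; ring⟩
      · exact ⟨τ0, -σ0, fun h => hσ0z (by simpa using neg_eq_zero.mp h.2),
          by ring, by rw [hσ1z, hτ1z]; ring⟩
    · have hτ0z : τ0 = 0 := by
        rw [hτ1z, mul_zero, zero_add] at h01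
        exact (mul_eq_zero.mp h01).resolve_left hσ1z
      exact ⟨0, 1, by simp, by rw [hτ0z]; ring, by rw [hτ1z]; ring⟩
  · have hσ1z : σ1 = 0 := (mul_eq_zero.mp h11).resolve_right hτ1z
    have hσ0z : σ0 = 0 := by
      rw [hσ1z, zero_mul, add_zero] at h01
      exact (mul_eq_zero.mp h01).resolve_right hτ1z
    exact ⟨1, 0, by simp, by rw [hσ0z]; ring, by rw [hσ1z]; ring⟩

lemma det_trick (a b σ0 σ1 τ0 τ1 : ℂ) (hab : ¬(a = 0 ∧ b = 0)) :
    ∃ l μ c : ℂ, ¬(l = 0 ∧ μ = 0) ∧ l * σ0 + μ * τ0 = c * (2 * a) ∧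
      l * σ1 + μ * τ1 = c * (3 * b ^ 2) := by
  by_cases hdet : σ0 * (3 * b ^ 2) - σ1 * (2 * a) = 0
  · by_cases ha : a = 0
    · have hb : b ≠ 0 := fun hb => hab ⟨ha, hb⟩
      have h3b : (3 : ℂ) * b ^ 2 ≠ 0 := mul_ne_zero three_ne_zero (pow_ne_zero 2 hb)
      have hσ0z : σ0 = 0 := by
        have h2 : σ0 * (3 * b ^ 2) = 0 := by rw [ha] at hdet; linear_combination hdet
        exact (mul_eq_zero.mp h2).resolve_right h3b
      refine ⟨1, 0, σ1 / (3 * b ^ 2), by simp, by rw [hσ0z, ha]; ring, ?_⟩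
      field_simp
      ring
    · have h2a : (2 : ℂ) * a ≠ 0 := mul_ne_zero two_ne_zero ha
      refine ⟨1, 0, σ0 / (2 * a), by simp, by field_simp; ring, ?_⟩
      field_simp
      linear_combination -hdet
  · refine ⟨τ0 * (3 * b ^ 2) - τ1 * (2 * a), -(σ0 * (3 * b ^ 2) - σ1 * (2 * a)),
      σ1 * τ0 - σ0 * τ1, ?_, by ring, by ring⟩
    intro h
    exact hdet (by simpa using neg_eq_zero.mp h.2)

lemma cusp_core (pt : Fin 2 → ℂ) (S T Qt : R2) (hS : S ∈ M0) (hT : T ∈ M0) (hQt : Qt ∈ M0)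
    (hQt_eq : Qt = (X 0 + C (pt 0)) ^ 2 + (X 1 + C (pt 1)) ^ 3)
    (hST : S * T ∈ M0 ^ 3 ⊔ Ideal.span {Qt}) :
    ∃ l μ c : ℂ, ¬(l = 0 ∧ μ = 0) ∧ C l * S + C μ * T - C c * Qt ∈ M0 ^ 2 := by
  classical
  obtain ⟨u, hu, v, hv, huv⟩ := Submodule.mem_sup.mp hST
  obtain ⟨g, hg⟩ := Ideal.mem_span_singleton'.mp hv
  have hQcc : constantCoeff Qt = 0 := mem_M0.mp hQt
  have hQexp : Qt = (X 0 + C (pt 0)) * (X 0 + C (pt 0)) +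
      (X 1 + C (pt 1)) * ((X 1 + C (pt 1)) * (X 1 + C (pt 1))) := by
    rw [hQt_eq]; ring
  have hQd0 : constantCoeff (pderiv 0 Qt) = 2 * pt 0 := by
    rw [hQexp]
    simp [pderiv_mul, pderiv_X_self, pderiv_X_of_ne]
    ring
  have hQd1 : constantCoeff (pderiv 1 Qt) = 3 * pt 1 ^ 2 := by
    rw [hQexp]
    simp [pderiv_mul, pderiv_X_self, pderiv_X_of_ne]
    ring
  have hQd11 : constantCoeff (pderiv 1 (pderiv 1 Qt)) = 6 * pt 1 := by
    rw [hQexp]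
    simp [pderiv_mul, pderiv_X_self, pderiv_X_of_ne]
    ring
  have hQd01 : constantCoeff (pderiv 0 (pderiv 1 Qt)) = 0 := by
    rw [hQexp]
    simp [pderiv_mul, pderiv_X_self, pderiv_X_of_ne]
  have main : ∃ l μ c : ℂ, ¬(l = 0 ∧ μ = 0) ∧
      l * constantCoeff (pderiv 0 S) + μ * constantCoeff (pderiv 0 T) = c * (2 * pt 0) ∧
      l * constantCoeff (pderiv 1 S) + μ * constantCoeff (pderiv 1 T) =
        c * (3 * pt 1 ^ 2) := by
    by_cases hab : pt 0 = 0 ∧ pt 1 = 0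
    · obtain ⟨ha, hb⟩ := hab
      have hrel : ∀ i : Fin 2,
          constantCoeff (pderiv i (pderiv 1 (S * T))) =
          constantCoeff (pderiv i (pderiv 1 u)) +
          constantCoeff (pderiv i (pderiv 1 (g * Qt))) := by
        intro i
        rw [← huv, ← hg]
        simp
      have hrel11 : constantCoeff (pderiv 1 S) * constantCoeff (pderiv 1 T) = 0 := by
        have h1 := cc_pderiv2_mul_mem hS hT 1 1
        have h2 := hrel 1
        rw [cc_pderiv2_M0cube hu 1 1,
          cc_pderiv2_mul_right 1 1 hQcc (by rw [hQd1, hb]; ring) (by rw [hQd1, hb]; ring)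
            (by rw [hQd11, hb]; ring), add_zero] at h2
        rw [h2] at h1
        linear_combination -h1 / 2
      have hrel01 : constantCoeff (pderiv 0 S) * constantCoeff (pderiv 1 T) +
          constantCoeff (pderiv 1 S) * constantCoeff (pderiv 0 T) = 0 := by
        have h1 := cc_pderiv2_mul_mem hS hT 0 1
        have h2 := hrel 0
        rw [cc_pderiv2_M0cube hu 0 1,
          cc_pderiv2_mul_right 0 1 hQcc (by rw [hQd0, ha]; ring) (by rw [hQd1, hb]; ring)
            hQd01, add_zero] at h2
        rw [h2] at h1
        linear_combination -h1
      obtain ⟨l, μ, h1, h2, h3⟩ := dep_of_rel _ _ _ _ hrel11 hrel01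
      exact ⟨l, μ, 0, h1, by rw [h2]; ring, by rw [h3]; ring⟩
    · exact det_trick (pt 0) (pt 1) _ _ _ _ hab
  obtain ⟨l, μ, c, hlμ, e0, e1⟩ := main
  refine ⟨l, μ, c, hlμ, ?_⟩
  refine mem_M0sq ?_ ?_ ?_
  · simp [cc_M0 hS, cc_M0 hT, hQcc]
  · simp only [map_sub, map_add, pderiv_C_mul, map_mul, constantCoeff_C]
    rw [hQd0]
    linear_combination e0
  · simp only [map_sub, map_add, pderiv_C_mul, map_mul, constantCoeff_C]
    rw [hQd1]
    linear_combination e1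

set_option maxHeartbeats 2000000 in
set_option synthInstance.maxHeartbeats 400000 in
lemma cusp_side (Q0 : R2) (hQ0def : Q0 = X 0 ^ 2 + X 1 ^ 3)
    (m : Ideal (R2 ⧸ Ideal.span {Q0})) (hm : m.IsMaximal) (s t : R2 ⧸ Ideal.span {Q0})
    (hs : s ∈ m) (ht : t ∈ m) (hst : s * t ∈ m ^ 3) :
    ∃ l μ : ℂ, ¬(l = 0 ∧ μ = 0) ∧ l • s + μ • t ∈ m ^ 2 := by
  classical
  have hNmax : (Ideal.comap (Ideal.Quotient.mk (Ideal.span {Q0})) m).IsMaximal :=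
    Ideal.comap_isMaximal_of_surjective _ Ideal.Quotient.mk_surjective (H := hm)
  obtain ⟨pt, hpt⟩ := isMaximal_iff_eq_vanishingIdeal_singleton.mp hNmax
  have hEX : ∀ i, (trEquiv pt).toRingEquiv (X i) = X i - C (pt i) :=
    fun i => trEquiv_apply_X pt i
  have hEC : ∀ z : ℂ, (trEquiv pt).toRingEquiv (C z) = C z := fun z => trEquiv_C pt z
  have hNle : M0 ≤ Ideal.comap (trEquiv pt).toRingEquiv
      (Ideal.comap (Ideal.Quotient.mk (Ideal.span {Q0})) m) := by
    rw [M0, Ideal.span_le]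
    rintro g (rfl | rfl)
    · rw [SetLike.mem_coe, Ideal.mem_comap, hpt, mem_vanishingIdeal_singleton_iff, hEX]
      simp
    · rw [SetLike.mem_coe, Ideal.mem_comap, hpt, mem_vanishingIdeal_singleton_iff, hEX]
      simp
  have hcomapN : Ideal.comap (trEquiv pt).toRingEquiv
      (Ideal.comap (Ideal.Quotient.mk (Ideal.span {Q0})) m) = M0 := by
    have hmax2 : (Ideal.comap (trEquiv pt).toRingEquiv
        (Ideal.comap (Ideal.Quotient.mk (Ideal.span {Q0})) m)).IsMaximal :=
      Ideal.comap_isMaximal_of_surjective _ (EquivLike.surjective _) (H := hNmax)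
    exact (M0_isMaximal.eq_of_le hmax2.ne_top hNle).symm
  have hNmap : Ideal.map (trEquiv pt).toRingEquiv M0 =
      Ideal.comap (Ideal.Quotient.mk (Ideal.span {Q0})) m := by
    rw [← hcomapN]
    exact Ideal.map_comap_of_surjective _ (EquivLike.surjective _) _
  have hmemmap : ∀ (J : Ideal R2) (x : R2),
      x ∈ Ideal.map (trEquiv pt).toRingEquiv J ↔ (trEquiv pt).toRingEquiv.symm x ∈ J := by
    intro J x
    rw [← Ideal.comap_symm (trEquiv pt).toRingEquiv, Ideal.mem_comap]
  obtain ⟨S0, hS0⟩ := Ideal.Quotient.mk_surjective s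
  obtain ⟨T0, hT0⟩ := Ideal.Quotient.mk_surjective t
  have hS0N : S0 ∈ Ideal.comap (Ideal.Quotient.mk (Ideal.span {Q0})) m :=
    Ideal.mem_comap.mpr (by rw [hS0]; exact hs)
  have hT0N : T0 ∈ Ideal.comap (Ideal.Quotient.mk (Ideal.span {Q0})) m :=
    Ideal.mem_comap.mpr (by rw [hT0]; exact ht)
  have hS : (trEquiv pt).toRingEquiv.symm S0 ∈ M0 :=
    (hmemmap M0 S0).mp (by rw [hNmap]; exact hS0N)
  have hT : (trEquiv pt).toRingEquiv.symm T0 ∈ M0 :=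
    (hmemmap M0 T0).mp (by rw [hNmap]; exact hT0N)
  have hπQ0 : Ideal.Quotient.mk (Ideal.span {Q0}) Q0 = 0 :=
    Ideal.Quotient.eq_zero_iff_mem.mpr (Ideal.mem_span_singleton_self Q0)
  have hQ0N : Q0 ∈ Ideal.comap (Ideal.Quotient.mk (Ideal.span {Q0})) m :=
    Ideal.mem_comap.mpr (by rw [hπQ0]; exact zero_mem m)
  have hQt : (trEquiv pt).toRingEquiv.symm Q0 ∈ M0 :=
    (hmemmap M0 Q0).mp (by rw [hNmap]; exact hQ0N)
  have hQt_eq : (trEquiv pt).toRingEquiv.symm Q0 =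
      (X 0 + C (pt 0)) ^ 2 + (X 1 + C (pt 1)) ^ 3 := by
    rw [show (trEquiv pt).toRingEquiv.symm Q0 = aeval (fun i => X i + C (pt i)) Q0 from rfl,
      hQ0def]
    simp
  have hST : (trEquiv pt).toRingEquiv.symm S0 * (trEquiv pt).toRingEquiv.symm T0 ∈
      M0 ^ 3 ⊔ Ideal.span {(trEquiv pt).toRingEquiv.symm Q0} := by
    have hmN : Ideal.map (Ideal.Quotient.mk (Ideal.span {Q0}))
        (Ideal.comap (Ideal.Quotient.mk (Ideal.span {Q0})) m) = m :=
      Ideal.map_comap_of_surjective _ Ideal.Quotient.mk_surjective m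
    have h1 : S0 * T0 ∈ (Ideal.comap (Ideal.Quotient.mk (Ideal.span {Q0})) m) ^ 3 ⊔
        Ideal.span {Q0} := by
      have h2 : Ideal.Quotient.mk (Ideal.span {Q0}) (S0 * T0) ∈
          Ideal.map (Ideal.Quotient.mk (Ideal.span {Q0}))
            ((Ideal.comap (Ideal.Quotient.mk (Ideal.span {Q0})) m) ^ 3) := by
        rw [Ideal.map_pow, hmN, map_mul, hS0, hT0]
        exact hst
      have h3 := Ideal.mem_comap.mpr h2
      rwa [Ideal.comap_map_of_surjective _ Ideal.Quotient.mk_surjective,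
        ← RingHom.ker_eq_comap_bot, Ideal.mk_ker] at h3
    have hmapJ : Ideal.map (trEquiv pt).toRingEquiv
        (M0 ^ 3 ⊔ Ideal.span {(trEquiv pt).toRingEquiv.symm Q0}) =
        (Ideal.comap (Ideal.Quotient.mk (Ideal.span {Q0})) m) ^ 3 ⊔ Ideal.span {Q0} := by
      rw [Ideal.map_sup, Ideal.map_pow, hNmap, Ideal.map_span, Set.image_singleton,
        RingEquiv.apply_symm_apply]
    have h4 := (hmemmap _ (S0 * T0)).mp (by rw [hmapJ]; exact h1)
    rwa [map_mul] at h4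
  obtain ⟨l, μ, c, hlμ, hf⟩ := cusp_core pt _ _ _ hS hT hQt hQt_eq hST
  refine ⟨l, μ, hlμ, ?_⟩
  have hEf : (trEquiv pt).toRingEquiv
      (C l * (trEquiv pt).toRingEquiv.symm S0 + C μ * (trEquiv pt).toRingEquiv.symm T0 -
        C c * (trEquiv pt).toRingEquiv.symm Q0) = C l * S0 + C μ * T0 - C c * Q0 := by
    rw [map_sub, map_add, map_mul, map_mul, map_mul, hEC, hEC, hEC,
      RingEquiv.apply_symm_apply, RingEquiv.apply_symm_apply, RingEquiv.apply_symm_apply]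
  have hgoal : l • s + μ • t = Ideal.Quotient.mk (Ideal.span {Q0})
      (C l * S0 + C μ * T0 - C c * Q0) := by
    rw [map_sub, map_add, mk_C_mul_smul, mk_C_mul_smul, map_mul, hπQ0, mul_zero,
      sub_zero, hS0, hT0]
  rw [hgoal, ← hEf]
  have hEf2 : (trEquiv pt).toRingEquiv
      (C l * (trEquiv pt).toRingEquiv.symm S0 + C μ * (trEquiv pt).toRingEquiv.symm T0 -
        C c * (trEquiv pt).toRingEquiv.symm Q0) ∈
      (Ideal.comap (Ideal.Quotient.mk (Ideal.span {Q0})) m) ^ 2 := by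
    rw [← hNmap, ← Ideal.map_pow]
    exact Ideal.mem_map_of_mem _ hf
  have hm2 : Ideal.map (Ideal.Quotient.mk (Ideal.span {Q0}))
      ((Ideal.comap (Ideal.Quotient.mk (Ideal.span {Q0})) m) ^ 2) = m ^ 2 := by
    rw [Ideal.map_pow, Ideal.map_comap_of_surjective _ Ideal.Quotient.mk_surjective]
  rw [← hm2]
  exact Ideal.mem_map_of_mem _ hEf2

end Ex21Aux

set_option maxHeartbeats 1000000 in
set_option synthInstance.maxHeartbeats 400000 in
/-- Example 2.1 of the paper: with `x = X 0`, `y = X 1` in `ℂ[x,y]`, the quotient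
algebras `ℂ[x,y]/⟨x² + xy + y³⟩` and `ℂ[x,y]/⟨x² + y³⟩` are not isomorphic. -/
theorem example_2_1_non_isomorphism
    (p q : MvPolynomial (Fin 2) ℂ)
    (hp : p = X 0 ^ 2 + X 0 * X 1 + X 1 ^ 3)
    (hq : q = X 0 ^ 2 + X 1 ^ 3) :
    ¬ Nonempty ((MvPolynomial (Fin 2) ℂ ⧸ Ideal.span {p}) ≃ₐ[ℂ]
      (MvPolynomial (Fin 2) ℂ ⧸ Ideal.span {q})) := by
  subst hp hq
  rintro ⟨e⟩
  obtain ⟨m, hmax, s, t, hs, ht, hst, hindep⟩ := node_side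
  have hmemmap : ∀ (J : Ideal (R2 ⧸ Ideal.span {(X 0 ^ 2 + X 0 * X 1 + X 1 ^ 3 : R2)}))
      (x : R2 ⧸ Ideal.span {(X 0 ^ 2 + X 1 ^ 3 : R2)}),
      x ∈ Ideal.map e.toRingEquiv J ↔ e.toRingEquiv.symm x ∈ J := by
    intro J x
    rw [← Ideal.comap_symm e.toRingEquiv, Ideal.mem_comap]
  have hmax' : (Ideal.map e.toRingEquiv m).IsMaximal := by
    rw [← Ideal.comap_symm e.toRingEquiv]
    exact Ideal.comap_isMaximal_of_surjective _ (EquivLike.surjective _) (H := hmax)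
  have hsymm_apply : ∀ x, e.toRingEquiv.symm (e.toRingEquiv x) = x := fun x =>
    e.toRingEquiv.symm_apply_apply x
  have hs' : e s ∈ Ideal.map e.toRingEquiv m :=
    (hmemmap m (e s)).mpr (by rw [show e.toRingEquiv.symm (e s) = s from hsymm_apply s]; exact hs)
  have ht' : e t ∈ Ideal.map e.toRingEquiv m :=
    (hmemmap m (e t)).mpr (by rw [show e.toRingEquiv.symm (e t) = t from hsymm_apply t]; exact ht)
  have hst' : e s * e t ∈ (Ideal.map e.toRingEquiv m) ^ 3 := by
    rw [← Ideal.map_pow]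
    refine (hmemmap (m ^ 3) (e s * e t)).mpr ?_
    have : e s * e t = e (s * t) := (map_mul e s t).symm
    rw [this, show e.toRingEquiv.symm (e (s * t)) = s * t from hsymm_apply (s * t)]
    exact hst
  obtain ⟨l, μ, hlμ, hmem⟩ := cusp_side _ rfl (Ideal.map e.toRingEquiv m) hmax'
    (e s) (e t) hs' ht' hst'
  apply hlμ
  apply hindep l μ
  rw [← Ideal.map_pow] at hmem
  have h2 := (hmemmap (m ^ 2) _).mp hmem
  have hpull : e.toRingEquiv.symm (l • e s + μ • e t) = l • s + μ • t := by
    show e.symm (l • e s + μ • e t) = l • s + μ • t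
    rw [map_add, map_smul, map_smul, e.symm_apply_apply, e.symm_apply_apply]
  rwa [hpull] at h2
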